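/- If f is a monotone, strict, length-preserving, adjacency-preserving function on finite binary strings, then the induced function F : [0,1] → [0,1] on represented reals is continuous; in fact for all x, y and all k, |x − y| ≤ 2^{−k} implies |F(x) − F(y)| ≤ 2^{−k+2}, so F is uniformly continuous. -/

import Mathlib

/-- Base-2 value of a binary string. -/
def valList : List (Fin 2) → ℕ :=
  List.foldl (fun n d => 2 * n + d.val) 0

/-- The length-`k` prefix of an infinite binary sequence, as a binary string. -/
def pre (s : ℕ → Fin 2) (k : ℕ) : List (Fin 2) := (List.range k).map s

/-- The real number in `[0,1]` represented by an infinite binary sequence. -/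
noncomputable def phi (s : ℕ → Fin 2) : ℝ := ∑' i : ℕ, ((s i : ℕ) : ℝ) / 2 ^ (i + 1)

lemma valList_foldl (u : List (Fin 2)) (n : ℕ) :
    List.foldl (fun n d => 2 * n + d.val) n u = n * 2 ^ u.length + valList u := by
  induction u generalizing n with
  | nil => simp [valList]
  | cons d t ih =>
    simp only [List.foldl_cons, valList, List.length_cons]
    rw [ih, ih (2*0+d.val)]
    ring

lemma valList_append_singleton (u : List (Fin 2)) (d : Fin 2) :
    valList (u ++ [d]) = 2 * valList u + d.val := by
  simp [valList, List.foldl_append]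

lemma valList_lt (u : List (Fin 2)) : valList u < 2 ^ u.length := by
  induction u using List.reverseRecOn with
  | nil => simp [valList]
  | append_singleton t d ih =>
    rw [valList_append_singleton]
    simp only [List.length_append, List.length_singleton, pow_add, pow_one]
    omega

lemma pre_succ (s : ℕ → Fin 2) (k : ℕ) : pre s (k+1) = pre s k ++ [s k] := by
  simp [pre, List.range_succ]

lemma pre_length (s : ℕ → Fin 2) (k : ℕ) : (pre s k).length = k := by simp [pre]

lemma pre_prefix (s : ℕ → Fin 2) {m k : ℕ} (h : m ≤ k) : pre s m <+: pre s k := by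
  have : pre s m = (pre s k).take m := by
    rw [pre, pre, ← List.map_take, List.take_range, min_eq_left h]
  rw [this]
  exact List.take_prefix _ _

lemma summable_phi (s : ℕ → Fin 2) :
    Summable (fun i : ℕ => ((s i : ℕ) : ℝ) / 2 ^ (i + 1)) := by
  apply Summable.of_nonneg_of_le (fun i => by positivity)
    (fun i => ?_) (summable_geometric_two)
  have : ((s i : ℕ) : ℝ) ≤ 1 := by
    have := (s i).2; exact_mod_cast Nat.lt_succ_iff.mp this
  rw [div_le_iff₀ (by positivity)]
  calc ((s i : ℕ) : ℝ) ≤ 1 := this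
    _ ≤ (1/2)^i * 2^(i+1) := by
        rw [pow_succ, one_div, inv_pow, inv_mul_eq_div, mul_comm (2^i) 2]
        rw [mul_div_assoc, div_self (by positivity)]
        norm_num
  
lemma partial_sum_eq (s : ℕ → Fin 2) (k : ℕ) :
    ∑ i ∈ Finset.range k, ((s i : ℕ) : ℝ) / 2 ^ (i + 1)
      = (valList (pre s k) : ℝ) / 2 ^ k := by
  induction k with
  | zero => simp [pre, valList]
  | succ k ih =>
    rw [Finset.sum_range_succ, ih, pre_succ, valList_append_singleton]
    push_cast
    field_simp
    ring

lemma phi_nonneg (s : ℕ → Fin 2) : 0 ≤ phi s :=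
  tsum_nonneg (fun i => by positivity)

lemma phi_le_one (s : ℕ → Fin 2) : phi s ≤ 1 := by
  have h1 : ∀ i : ℕ, ((s i : ℕ) : ℝ) / 2 ^ (i + 1) ≤ 1 / 2 ^ (i + 1) := by
    intro i
    gcongr
    have := (s i).2
    exact_mod_cast Nat.lt_succ_iff.mp this
  have h2 : Summable (fun i : ℕ => (1:ℝ) / 2 ^ (i + 1)) := by
    have := summable_geometric_two' 1
    simpa [pow_succ, div_div, mul_comm, div_eq_mul_inv] using this
  calc phi s ≤ ∑' i : ℕ, (1:ℝ) / 2 ^ (i + 1) := Summable.tsum_le_tsum h1 (summable_phi s) h2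
    _ = 1 := by
      have := tsum_geometric_two' 1
      conv_rhs => rw [← this]
      apply tsum_congr
      intro n
      rw [pow_succ, div_div, mul_comm]

lemma phi_bounds (s : ℕ → Fin 2) (k : ℕ) :
    (valList (pre s k) : ℝ) / 2 ^ k ≤ phi s ∧
      phi s ≤ (valList (pre s k) : ℝ) / 2 ^ k + (2 : ℝ)⁻¹ ^ k := by
  have hsum := summable_phi s
  have hsplit := (Summable.sum_add_tsum_nat_add (f := fun i : ℕ => ((s i : ℕ) : ℝ) / 2 ^ (i + 1)) k hsum).symm
  rw [partial_sum_eq] at hsplit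
  have hre : ∀ i : ℕ, ((s (i + k) : ℕ) : ℝ) / 2 ^ (i + k + 1)
      = (2:ℝ)⁻¹ ^ k * (((s (i + k) : ℕ) : ℝ) / 2 ^ (i + 1)) := by
    intro i
    rw [show i + k + 1 = (i + 1) + k by ring, pow_add, inv_pow]
    field_simp
  have htail : ∑' i : ℕ, ((s (i + k) : ℕ) : ℝ) / 2 ^ (i + k + 1)
      = (2:ℝ)⁻¹ ^ k * phi (fun i => s (i + k)) := by
    rw [phi, ← tsum_mul_left]
    exact tsum_congr hre
  have h0 := phi_nonneg (fun i => s (i + k))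
  have h1 := phi_le_one (fun i => s (i + k))
  have hp : (0:ℝ) < (2:ℝ)⁻¹ ^ k := by positivity
  constructor
  · rw [phi, hsplit, htail]; nlinarith
  · rw [phi, hsplit, htail]; nlinarith

def ofNat : ℕ → ℕ → List (Fin 2)
  | 0, _ => []
  | k + 1, n => ofNat k (n / 2) ++ [⟨n % 2, by omega⟩]

lemma ofNat_length (k n : ℕ) : (ofNat k n).length = k := by
  induction k generalizing n with
  | zero => rfl
  | succ k ih => simp [ofNat, ih]

lemma valList_ofNat (k n : ℕ) (h : n < 2 ^ k) : valList (ofNat k n) = n := by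
  induction k generalizing n with
  | zero => interval_cases n; rfl
  | succ k ih =>
    rw [ofNat, valList_append_singleton, ih (n / 2) (by rw [pow_succ] at h; omega)]
    simp only [Fin.val_mk]
    omega

lemma ofNat_valList (u : List (Fin 2)) : ofNat u.length (valList u) = u := by
  induction u using List.reverseRecOn with
  | nil => rfl
  | append_singleton t d ih =>
    rw [valList_append_singleton]
    simp only [List.length_append, List.length_singleton]
    rw [ofNat]
    have hd := d.2
    have h1 : (2 * valList t + d.val) / 2 = valList t := by omega
    have h2 : (2 * valList t + d.val) % 2 = d.val := by omega
    rw [h1, ih]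
    congr 1
    simp [Fin.ext_iff, h2]

lemma eq_of_forall_dist_le2 {a b : ℝ} (h : ∀ k : ℕ, |a - b| ≤ 2 * (2:ℝ)⁻¹ ^ k) :
    a = b := by
  have h0 : Filter.Tendsto (fun k : ℕ => 2 * (2:ℝ)⁻¹ ^ k) Filter.atTop (nhds 0) := by
    have := (tendsto_pow_atTop_nhds_zero_of_lt_one (by norm_num : (0:ℝ) ≤ 2⁻¹)
      (by norm_num : (2:ℝ)⁻¹ < 1)).const_mul 2
    simpa using this
  have : |a - b| ≤ 0 :=
    le_of_tendsto_of_tendsto' tendsto_const_nhds h0 h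
  have := abs_nonneg (a - b)
  have : a - b = 0 := by
    apply abs_eq_zero.mp; linarith
  linarith

lemma valList_pre_ones (k : ℕ) : valList (pre (fun _ => 1) k) = 2 ^ k - 1 := by
  induction k with
  | zero => simp [pre, valList]
  | succ k ih =>
    rw [pre_succ, valList_append_singleton, ih]
    have : 1 ≤ 2 ^ k := Nat.one_le_two_pow
    rw [pow_succ]
    simp
    omega

lemma exists_phi_eq (x : ℝ) (hx0 : 0 ≤ x) (hx1 : x ≤ 1) : ∃ s : ℕ → Fin 2, phi s = x := by
  rcases eq_or_lt_of_le hx1 with h1 | h1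
  · subst h1
    refine ⟨fun _ => 1, ?_⟩
    apply eq_of_forall_dist_le2
    intro k
    obtain ⟨hb1, hb2⟩ := phi_bounds (fun _ => 1) k
    rw [valList_pre_ones] at hb1 hb2
    have hkpos : (0:ℝ) < 2 ^ k := by positivity
    have hk : (1:ℝ) ≤ 2 ^ k := by
      exact_mod_cast Nat.one_le_two_pow (n := k)
    have hcast : ((2 ^ k - 1 : ℕ) : ℝ) = 2 ^ k - 1 := by
      push_cast [Nat.one_le_two_pow]
      ring
    rw [hcast] at hb1 hb2
    have hd : ((2:ℝ) ^ k - 1) / 2 ^ k = 1 - 2⁻¹ ^ k := by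
      rw [inv_pow]
      field_simp
    rw [hd] at hb1 hb2
    have hep : (0:ℝ) < 2⁻¹ ^ k := by positivity
    rw [abs_le]
    constructor <;> linarith
  · set s : ℕ → Fin 2 := fun i => ⟨(⌊x * 2 ^ (i+1)⌋).toNat % 2, by omega⟩ with hs
    have key : ∀ k : ℕ, (valList (pre s k) : ℤ) = ⌊x * 2 ^ k⌋ := by
      intro k
      induction k with
      | zero =>
        have h0 : ⌊x * 2 ^ 0⌋ = 0 := by
          rw [Int.floor_eq_zero_iff]
          refine Set.mem_Ico.mpr ⟨by simpa using hx0, by simpa using h1⟩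
        simp only [pow_zero, mul_one] at h0
        simp [pre, valList, h0]
      | succ k ih =>
        rw [pre_succ, valList_append_singleton]
        have hy0 : 0 ≤ x * 2 ^ k := by positivity
        have hfl0 : 0 ≤ ⌊x * 2 ^ k⌋ := Int.floor_nonneg.mpr hy0
        have harg : x * 2 ^ (k+1) = 2 * (x * 2 ^ k) := by ring
        have hlow : 2 * ⌊x * 2 ^ k⌋ ≤ ⌊x * 2 ^ (k+1)⌋ := by
          rw [harg]
          exact Int.le_floor.mpr (by push_cast; nlinarith [Int.floor_le (x * 2 ^ k)])
        have hhigh : ⌊x * 2 ^ (k+1)⌋ < 2 * ⌊x * 2 ^ k⌋ + 2 := by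
          rw [harg]
          exact Int.floor_lt.mpr (by push_cast; nlinarith [Int.lt_floor_add_one (x * 2 ^ k)])
        have hsv : (s k).val = (⌊x * 2 ^ (k+1)⌋).toNat % 2 := rfl
        push_cast [hsv, ih]
        omega
    refine ⟨s, eq_of_forall_dist_le2 fun k => ?_⟩
    obtain ⟨hb1, hb2⟩ := phi_bounds s k
    have hkpos : (0:ℝ) < 2 ^ k := by positivity
    have he : (2:ℝ)⁻¹ ^ k * 2 ^ k = 1 := by rw [← mul_pow]; norm_num
    have hfl : ((valList (pre s k) : ℝ)) = ((⌊x * 2 ^ k⌋ : ℤ) : ℝ) := by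
      exact_mod_cast congrArg (fun z : ℤ => (z : ℝ)) (key k)
    rw [hfl] at hb1 hb2
    have h2 : ((⌊x * 2 ^ k⌋ : ℤ) : ℝ) ≤ x * 2 ^ k := Int.floor_le _
    have h3 : x * 2 ^ k < ((⌊x * 2 ^ k⌋ : ℤ) : ℝ) + 1 := Int.lt_floor_add_one _
    have hb1' : ((⌊x * 2 ^ k⌋ : ℤ) : ℝ) ≤ phi s * 2 ^ k := by
      calc ((⌊x * 2 ^ k⌋ : ℤ) : ℝ) = ((⌊x * 2 ^ k⌋ : ℤ) : ℝ) / 2 ^ k * 2 ^ k := by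
            field_simp
        _ ≤ phi s * 2 ^ k := mul_le_mul_of_nonneg_right hb1 hkpos.le
    have hb2' : phi s * 2 ^ k ≤ ((⌊x * 2 ^ k⌋ : ℤ) : ℝ) + 1 := by
      calc phi s * 2 ^ k ≤ (((⌊x * 2 ^ k⌋ : ℤ) : ℝ) / 2 ^ k + 2⁻¹ ^ k) * 2 ^ k :=
            mul_le_mul_of_nonneg_right hb2 hkpos.le
        _ = ((⌊x * 2 ^ k⌋ : ℤ) : ℝ) + 1 := by
            rw [add_mul, he, div_mul_cancel₀ _ hkpos.ne']
    rw [abs_le]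
    constructor
    · nlinarith
    · nlinarith

lemma chain_aux (f : List (Fin 2) → List (Fin 2))
    (hadj : ∀ u v : List (Fin 2), u.length = v.length →
      |(valList u : ℤ) - (valList v : ℤ)| = 1 →
      |(valList (f u) : ℤ) - (valList (f v) : ℤ)| ≤ 1) :
    ∀ d k n : ℕ, n + d < 2 ^ k →
      |(valList (f (ofNat k (n + d))) : ℤ) - (valList (f (ofNat k n)) : ℤ)| ≤ d := by
  intro d
  induction d with
  | zero => intro k n _; simp
  | succ d ih =>
    intro k n hn
    have h1 : |(valList (f (ofNat k (n + d + 1))) : ℤ)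
        - (valList (f (ofNat k (n + d))) : ℤ)| ≤ 1 := by
      apply hadj _ _ (by rw [ofNat_length, ofNat_length])
      rw [valList_ofNat k (n + d + 1) (by omega), valList_ofNat k (n + d) (by omega)]
      push_cast
      rw [abs_eq (by norm_num : (0:ℤ) ≤ 1)]
      left; ring
    have h2 := ih k n (by omega)
    have h3 := abs_sub_le (valList (f (ofNat k (n + d + 1))) : ℤ)
      (valList (f (ofNat k (n + d))) : ℤ) (valList (f (ofNat k n)) : ℤ)
    have : n + (d + 1) = n + d + 1 := by ring
    rw [this]
    push_cast at *
    linarith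

lemma chain_lemma (f : List (Fin 2) → List (Fin 2))
    (hadj : ∀ u v : List (Fin 2), u.length = v.length →
      |(valList u : ℤ) - (valList v : ℤ)| = 1 →
      |(valList (f u) : ℤ) - (valList (f v) : ℤ)| ≤ 1) :
    ∀ (d k n m : ℕ), n < 2 ^ k → m < 2 ^ k → |(n : ℤ) - m| ≤ d →
      |(valList (f (ofNat k n)) : ℤ) - (valList (f (ofNat k m)) : ℤ)| ≤ d := by
  have main : ∀ (d k n m : ℕ), m ≤ n → n < 2 ^ k → |(n : ℤ) - m| ≤ d →
      |(valList (f (ofNat k n)) : ℤ) - (valList (f (ofNat k m)) : ℤ)| ≤ d := by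
    intro d k n m hmn hn h
    have hd : n - m ≤ d := by
      rw [abs_of_nonneg (by push_cast; omega : (0:ℤ) ≤ (n:ℤ) - m)] at h
      push_cast at h; omega
    have heq : m + (n - m) = n := by omega
    have := chain_aux f hadj (n - m) k m (by omega)
    rw [heq] at this
    calc |(valList (f (ofNat k n)) : ℤ) - (valList (f (ofNat k m)) : ℤ)|
        ≤ ((n - m : ℕ) : ℤ) := this
      _ ≤ d := by exact_mod_cast hd
  intro d k n m hn hm h
  rcases le_total m n with hmn | hmn
  · exact main d k n m hmn hn h
  · rw [abs_sub_comm]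
    exact main d k m n hmn hm (by rwa [abs_sub_comm] at h)

def gseq (f : List (Fin 2) → List (Fin 2)) (s : ℕ → Fin 2) (n : ℕ) : Fin 2 :=
  (f (pre s (n+1))).getD n 0

lemma pre_gseq (f : List (Fin 2) → List (Fin 2))
    (hmono : ∀ u v : List (Fin 2), u <+: v → f u <+: f v)
    (hlen : ∀ u : List (Fin 2), (f u).length = u.length)
    (s : ℕ → Fin 2) : ∀ m : ℕ, pre (gseq f s) m = f (pre s m) := by
  intro m
  induction m with
  | zero =>
    have h0 : (f (pre s 0)).length = 0 := by rw [hlen, pre_length]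
    rw [List.length_eq_zero_iff] at h0
    simp [pre] at h0 ⊢
    exact h0
  | succ m ih =>
    obtain ⟨t, ht⟩ := hmono _ _ (pre_prefix s (Nat.le_succ m))
    have hlt : t.length = 1 := by
      have h1 : (f (pre s (m+1))).length = m + 1 := by rw [hlen, pre_length]
      have h2 : (f (pre s m)).length = m := by rw [hlen, pre_length]
      have := congrArg List.length ht
      simp [h2] at this
      omega
    obtain ⟨c, hc⟩ := List.length_eq_one_iff.mp hlt
    subst hc
    have hg : gseq f s m = c := by
      rw [gseq, ← ht]
      rw [List.getD_append_right _ _ _ _ (by rw [hlen, pre_length])]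
      simp [hlen, pre_length]
    rw [pre_succ, ih, hg, ht]


/-- If `f` is a monotone, strict, length-preserving, adjacency-preserving function on
finite binary strings, then any induced function `F : [0,1] → [0,1]` (sending the real
represented by `s` to the real represented by the limit of `f` on the prefixes of `s`)
satisfies `|x − y| ≤ 2^{−k} → |F x − F y| ≤ 2^{−k+2}` on `[0,1]`, and is uniformly
continuous on `[0,1]`. -/
theorem stmt_14 (f : List (Fin 2) → List (Fin 2))
    (hmono : ∀ u v : List (Fin 2), u <+: v → f u <+: f v)
    (hstrict : ∀ u : List (Fin 2), ∃ v : List (Fin 2), u <+: v ∧ f v ≠ f u)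
    (hlen : ∀ u : List (Fin 2), (f u).length = u.length)
    (hadj : ∀ u v : List (Fin 2), u.length = v.length →
      |(valList u : ℤ) - (valList v : ℤ)| = 1 →
      |(valList (f u) : ℤ) - (valList (f v) : ℤ)| ≤ 1)
    (F : ℝ → ℝ)
    (hF : ∀ s g : ℕ → Fin 2, (∀ m : ℕ, ∃ k : ℕ, pre g m <+: f (pre s k)) →
      F (phi s) = phi g) :
    (∀ x ∈ Set.Icc (0 : ℝ) 1, ∀ y ∈ Set.Icc (0 : ℝ) 1, ∀ k : ℕ,
      |x - y| ≤ (2 : ℝ) ^ (-(k : ℤ)) → |F x - F y| ≤ (2 : ℝ) ^ (2 - (k : ℤ))) ∧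
    UniformContinuousOn F (Set.Icc (0 : ℝ) 1) := by
  have hzpow : ∀ k : ℕ, (2 : ℝ) ^ (-(k : ℤ)) = (2:ℝ)⁻¹ ^ k := by
    intro k
    rw [zpow_neg, zpow_natCast, inv_pow]
  have hzpow2 : ∀ k : ℕ, (2 : ℝ) ^ (2 - (k : ℤ)) = 4 * (2:ℝ)⁻¹ ^ k := by
    intro k
    rw [zpow_sub₀ (by norm_num : (2:ℝ) ≠ 0), zpow_natCast, inv_pow]
    norm_num
    rw [div_eq_mul_inv]
  have part1 : ∀ x ∈ Set.Icc (0 : ℝ) 1, ∀ y ∈ Set.Icc (0 : ℝ) 1, ∀ k : ℕ,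
      |x - y| ≤ (2 : ℝ) ^ (-(k : ℤ)) → |F x - F y| ≤ (2 : ℝ) ^ (2 - (k : ℤ)) := by
    intro x hx y hy k hxy
    rw [hzpow] at hxy
    rw [hzpow2]
    obtain ⟨s, hsx⟩ := exists_phi_eq x hx.1 hx.2
    obtain ⟨t, hty⟩ := exists_phi_eq y hy.1 hy.2
    have hFx : F x = phi (gseq f s) := by
      rw [← hsx]
      exact hF s (gseq f s) (fun m => ⟨m, (pre_gseq f hmono hlen s m) ▸ List.prefix_refl _⟩)
    have hFy : F y = phi (gseq f t) := by
      rw [← hty]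
      exact hF t (gseq f t) (fun m => ⟨m, (pre_gseq f hmono hlen t m) ▸ List.prefix_refl _⟩)
    set e : ℝ := (2:ℝ)⁻¹ ^ k with hedef
    have hkpos : (0:ℝ) < 2 ^ k := by positivity
    have hep : (0:ℝ) < e := by positivity
    have he : e * 2 ^ k = 1 := by rw [hedef, ← mul_pow]; norm_num
    set n := valList (pre s k) with hn
    set m := valList (pre t k) with hm
    obtain ⟨hs1, hs2⟩ := phi_bounds s k
    obtain ⟨ht1, ht2⟩ := phi_bounds t k
    rw [hsx] at hs1 hs2
    rw [hty] at ht1 ht2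
    rw [abs_le] at hxy
    -- integer distance between prefixes
    have hnx : (n:ℝ) ≤ x * 2 ^ k := by
      rw [← he] at *
      calc (n:ℝ) = (n:ℝ) / 2 ^ k * 2 ^ k := by field_simp
        _ ≤ x * 2 ^ k := mul_le_mul_of_nonneg_right hs1 hkpos.le
    have hnx2 : x * 2 ^ k ≤ (n:ℝ) + 1 := by
      calc x * 2 ^ k ≤ ((n:ℝ) / 2 ^ k + e) * 2 ^ k := mul_le_mul_of_nonneg_right hs2 hkpos.le
        _ = (n:ℝ) + 1 := by rw [add_mul, he, div_mul_cancel₀ _ hkpos.ne']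
    have hmy : (m:ℝ) ≤ y * 2 ^ k := by
      calc (m:ℝ) = (m:ℝ) / 2 ^ k * 2 ^ k := by field_simp
        _ ≤ y * 2 ^ k := mul_le_mul_of_nonneg_right ht1 hkpos.le
    have hmy2 : y * 2 ^ k ≤ (m:ℝ) + 1 := by
      calc y * 2 ^ k ≤ ((m:ℝ) / 2 ^ k + e) * 2 ^ k := mul_le_mul_of_nonneg_right ht2 hkpos.le
        _ = (m:ℝ) + 1 := by rw [add_mul, he, div_mul_cancel₀ _ hkpos.ne']
    have hd1 : (x - y) * 2 ^ k ≤ 1 := by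
      calc (x - y) * 2 ^ k ≤ e * 2 ^ k := mul_le_mul_of_nonneg_right hxy.2 hkpos.le
        _ = 1 := he
    have hd2 : -(1:ℝ) ≤ (x - y) * 2 ^ k := by
      calc -(1:ℝ) = (-e) * 2 ^ k := by rw [neg_mul, he]
        _ ≤ (x - y) * 2 ^ k := mul_le_mul_of_nonneg_right hxy.1 hkpos.le
    have hreal : |(n:ℝ) - (m:ℝ)| ≤ 2 := by
      rw [abs_le]
      constructor <;> nlinarith
    have hint : |(n:ℤ) - (m:ℤ)| ≤ 2 := by exact_mod_cast hreal
    have hnlt : n < 2 ^ k := by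
      have := valList_lt (pre s k); rwa [pre_length] at this
    have hmlt : m < 2 ^ k := by
      have := valList_lt (pre t k); rwa [pre_length] at this
    have hval := chain_lemma f hadj 2 k n m hnlt hmlt (by exact_mod_cast hint)
    have hosn : ofNat k n = pre s k := by
      have := ofNat_valList (pre s k)
      rwa [pre_length] at this
    have hosm : ofNat k m = pre t k := by
      have := ofNat_valList (pre t k)
      rwa [pre_length] at this
    rw [hosn, hosm] at hval
    set w := valList (f (pre s k)) with hw
    set v := valList (f (pre t k)) with hv
    have hwv : |(w:ℝ) - (v:ℝ)| ≤ 2 := by exact_mod_cast hval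
    obtain ⟨hg1, hg2⟩ := phi_bounds (gseq f s) k
    obtain ⟨hh1, hh2⟩ := phi_bounds (gseq f t) k
    rw [pre_gseq f hmono hlen s k] at hg1 hg2
    rw [pre_gseq f hmono hlen t k] at hh1 hh2
    rw [← hFx] at hg1 hg2
    rw [← hFy] at hh1 hh2
    rw [abs_le] at hwv
    have hq1 : ((w:ℝ) - v) / 2 ^ k ≤ 2 * e := by
      rw [div_le_iff₀ hkpos]
      nlinarith
    have hq2 : -(2 * e) ≤ ((w:ℝ) - v) / 2 ^ k := by
      rw [neg_le, ← neg_div, div_le_iff₀ hkpos]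
      nlinarith
    have hsub : (w:ℝ) / 2 ^ k - (v:ℝ) / 2 ^ k = ((w:ℝ) - v) / 2 ^ k := by ring
    rw [abs_le]
    constructor <;> linarith
  refine ⟨part1, ?_⟩
  rw [Metric.uniformContinuousOn_iff]
  intro ε hε
  obtain ⟨k, hk⟩ := exists_pow_lt_of_lt_one (show (0:ℝ) < ε / 4 by linarith)
    (show (2:ℝ)⁻¹ < 1 by norm_num)
  refine ⟨(2:ℝ)⁻¹ ^ k, by positivity, ?_⟩
  intro x hx y hy hd
  rw [Real.dist_eq] at hd
  have hb := part1 x hx y hy k (by rw [hzpow]; exact hd.le)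
  rw [hzpow2] at hb
  rw [Real.dist_eq]
  calc |F x - F y| ≤ 4 * (2:ℝ)⁻¹ ^ k := hb
    _ < 4 * (ε / 4) := by nlinarith
    _ = ε := by ring
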